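/- In the multiparametric quon algebra A, for every i ∈ ℕ⁺ and every finite sequence (j_1,…,j_t) of positive integers: a_i · a†_{j_1}⋯a†_{j_t} = (∏_{u=1}^{t} q_{i,j_u}) · a†_{j_1}⋯a†_{j_t} · a_i + Σ_{u ∈ {1,…,t}, j_u = i} (∏_{v=1}^{u−1} q_{i,j_v}) · a†_{j_1}⋯\widehat{a†_{j_u}}⋯a†_{j_t}, where the hat over the u-th factor indicates that this factor is omitted. -/

import Mathlib

/-- The coefficient ring `R = ℂ[q_{i,j} : i,j ∈ ℕ⁺]`. -/
abbrev QR : Type := MvPolynomial (ℕ+ × ℕ+) ℂ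

/-- The quon relations `a_i a_j† = q_{i,j} a_j† a_i + δ_{i,j}` on the free
`R`-algebra on the symbols `a_i` (`Sum.inl i`) and `a_i†` (`Sum.inr i`). -/
inductive QuonRel : FreeAlgebra QR (ℕ+ ⊕ ℕ+) → FreeAlgebra QR (ℕ+ ⊕ ℕ+) → Prop
  | rel (i j : ℕ+) : QuonRel
      (FreeAlgebra.ι QR (Sum.inl i) * FreeAlgebra.ι QR (Sum.inr j))
      ((MvPolynomial.X (i, j) : QR) •
          (FreeAlgebra.ι QR (Sum.inr j) * FreeAlgebra.ι QR (Sum.inl i))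
        + if i = j then 1 else 0)

/-- The multiparametric quon algebra `A`. -/
abbrev QuonAlg : Type := RingQuot QuonRel

/-- The annihilation operator `a_i`. -/
noncomputable def ann (i : ℕ+) : QuonAlg :=
  RingQuot.mkAlgHom QR QuonRel (FreeAlgebra.ι QR (Sum.inl i))

/-- The creation operator `a_i†`. -/
noncomputable def cre (i : ℕ+) : QuonAlg :=
  RingQuot.mkAlgHom QR QuonRel (FreeAlgebra.ι QR (Sum.inr i))

/-- The defining commutation relation in `QuonAlg`. -/
theorem ann_mul_cre (i j : ℕ+) :
    ann i * cre j = (MvPolynomial.X (i, j) : QR) • (cre j * ann i)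
      + if i = j then 1 else 0 := by
  have h := RingQuot.mkAlgHom_rel QR (QuonRel.rel i j)
  simpa [ann, cre, map_mul, map_add, map_smul, apply_ite] using h

/-- The commutation formula for moving `a_i` past a product of creation
operators `a†_{j_1}⋯a†_{j_t}`. -/
theorem ann_mul_cre_prod (i : ℕ+) (t : ℕ) (j : Fin t → ℕ+) :
    ann i * (List.ofFn fun u => cre (j u)).prod =
      (∏ u : Fin t, (MvPolynomial.X (i, j u) : QR)) •
          ((List.ofFn fun u => cre (j u)).prod * ann i)
        + ∑ u ∈ Finset.univ.filter (fun u : Fin t => j u = i),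
            (∏ v ∈ Finset.univ.filter (fun v : Fin t => v < u),
                (MvPolynomial.X (i, j v) : QR)) •
              ((List.ofFn fun v => cre (j v)).eraseIdx u).prod := by
  induction t with
  | zero => simp
  | succ t ih =>
    simp only [Finset.sum_filter, Finset.prod_filter] at *
    rw [List.ofFn_succ]
    simp only [List.prod_cons, Fin.sum_univ_succ, Fin.prod_univ_succ,
      List.eraseIdx_cons_zero, List.eraseIdx_cons_succ, Fin.val_succ,
      Fin.succ_lt_succ_iff, Fin.not_lt_zero, Fin.succ_pos, if_true, if_false,
      Fin.lt_def, Fin.val_zero]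
    rw [← mul_assoc, ann_mul_cre, add_mul, smul_mul_assoc, mul_assoc,
      ih (fun u => j u.succ)]
    simp only [mul_add, smul_add, Finset.mul_sum, Finset.smul_sum, mul_smul_comm,
      smul_smul, List.prod_cons, mul_assoc, ite_mul, one_mul, zero_mul,
      eq_comm (a := i)]
    simp only [Nat.lt_irrefl, Nat.not_lt_zero, Nat.succ_pos, Nat.succ_lt_succ_iff,
      if_true, if_false, smul_ite, smul_zero, smul_smul, Fin.lt_def]
    simp only [mul_ite, mul_zero, mul_smul_comm, smul_smul, smul_ite, smul_zero,
      Finset.prod_const_one, one_smul, mul_one]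
    abel
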